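/- Let J ⊂ ℝ be a compact interval, s₀ ∈ J, and let Ã : J → (n×n real matrices) be measurable and essentially bounded with Ã(s) skew-symmetric for almost every s. Let R₀ be an orthogonal n×n matrix. Then there exists a unique Lipschitz continuous matrix-valued function R : J → (n×n real matrices) satisfying R(s₀) = R₀ and R'(s) + R(s)Ã(s) = 0 for almost every s ∈ J; moreover, R(s) is an orthogonal matrix for every s ∈ J. -/

import Mathlib

open MeasureTheory Real Set Filter Matrix Metric Topology intervalIntegral
open scoped Interval

noncomputable section

namespace SkewODEAux





lemma le_of_lipschitz_ae_deriv_zero {K : NNReal} {φ : ℝ → ℝ} (hφ : LipschitzWith K φ)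
    {p q : ℝ} (h : ∀ᵐ x, x ∈ Ioo p q → HasDerivAt φ 0 x)
    {a b : ℝ} (ha : a ∈ Icc p q) (hb : b ∈ Icc p q) (hab : a ≤ b) : φ a ≤ φ b := by
  set ψ : ℝ → ℝ := fun x => φ x + K * x with hψdef
  have hmono : Monotone ψ := by
    intro x y hxy
    have hd := hφ.dist_le_mul x y
    rw [Real.dist_eq, Real.dist_eq] at hd
    have h1 : φ x - φ y ≤ K * (y - x) := by
      have := (abs_le.1 hd).2
      rw [abs_of_nonpos (by linarith : x - y ≤ 0)] at hd
      have := (abs_le.1 hd).1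
      linarith [le_abs_self (φ x - φ y), hd]
    simp only [hψdef]
    nlinarith
  have hcont : Continuous ψ := hφ.continuous.add (continuous_const.mul continuous_id)
  set f : StieltjesFunction ℝ := ⟨ψ, hmono, fun x => hcont.continuousWithinAt⟩ with hfdef
  have hfin : ∀ᵐ x, Measure.rnDeriv f.measure volume x < ⊤ :=
    Measure.rnDeriv_lt_top f.measure volume
  have key : ∀ᵐ x, x ∈ Ioo p q → Measure.rnDeriv f.measure volume x = ENNReal.ofReal K := by
    filter_upwards [f.ae_hasDerivAt, h, hfin] with x hx h0 hlt hmem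
    have hψ' : HasDerivAt ψ ((0 : ℝ) + K * 1) x := (h0 hmem).add ((hasDerivAt_id x).const_mul (K : ℝ))
    have hx' : HasDerivAt ψ ((Measure.rnDeriv f.measure volume x).toReal) x := hx
    have heq : (Measure.rnDeriv f.measure volume x).toReal = (K : ℝ) := by
      have := hx'.unique hψ'
      simpa using this
    rw [← ENNReal.ofReal_toReal hlt.ne, heq]
  have hle : ENNReal.ofReal ((K : ℝ) * (b - a)) ≤ ENNReal.ofReal (ψ b - ψ a) := by
    rw [← f.measure_Ioc a b]
    have h1 : (volume.withDensity (Measure.rnDeriv f.measure volume)) (Ioc a b) ≤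
        f.measure (Ioc a b) :=
      Measure.le_iff'.1 (Measure.withDensity_rnDeriv_le f.measure volume) _
    refine le_trans ?_ h1
    rw [withDensity_apply _ measurableSet_Ioc,
      Measure.restrict_congr_set (Ioo_ae_eq_Ioc (a := a) (b := b)).symm]
    have h2 : ∫⁻ x in Ioo a b, Measure.rnDeriv f.measure volume x ∂volume
        = ∫⁻ _ in Ioo a b, ENNReal.ofReal K ∂volume := by
      refine setLIntegral_congr_fun_ae measurableSet_Ioo ?_
      filter_upwards [key] with x hx hmem
      exact hx ⟨lt_of_le_of_lt ha.1 hmem.1, lt_of_lt_of_le hmem.2 hb.2⟩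
    rw [h2, setLIntegral_const, Real.volume_Ioo, ← ENNReal.ofReal_mul K.coe_nonneg]
  have h0 : (K : ℝ) * (b - a) ≤ ψ b - ψ a := by
    have hnn : 0 ≤ ψ b - ψ a := sub_nonneg.2 (hmono hab)
    exact (ENNReal.ofReal_le_ofReal_iff hnn).1 hle
  simp only [hψdef] at h0
  linarith

lemma eq_of_lipschitz_ae_deriv_zero {K : NNReal} {φ : ℝ → ℝ} (hφ : LipschitzWith K φ)
    {p q : ℝ} (h : ∀ᵐ x, x ∈ Ioo p q → HasDerivAt φ 0 x)
    {a b : ℝ} (ha : a ∈ Icc p q) (hb : b ∈ Icc p q) : φ a = φ b := by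
  have hneg : ∀ᵐ x, x ∈ Ioo p q → HasDerivAt (fun y => -φ y) 0 x := by
    filter_upwards [h] with x hx hmem
    simpa using (hx hmem).fun_neg
  rcases le_total a b with hab | hab
  · refine le_antisymm (le_of_lipschitz_ae_deriv_zero hφ h ha hb hab) ?_
    have := le_of_lipschitz_ae_deriv_zero hφ.neg hneg ha hb hab
    simp only [Pi.neg_apply] at this
    linarith
  · refine le_antisymm ?_ (le_of_lipschitz_ae_deriv_zero hφ h hb ha hab)
    have := le_of_lipschitz_ae_deriv_zero hφ.neg hneg hb ha hab
    simp only [Pi.neg_apply] at this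
    linarith






variable {F : Type*} [NormedAddCommGroup F] [NormedSpace ℝ F] [CompleteSpace F]

lemma intervalIntegrable_of_bound' {g : ℝ → F}
    (hm : AEStronglyMeasurable g volume) (C : ℝ) (h : ∀ u, ‖g u‖ ≤ C) (a b : ℝ) :
    IntervalIntegrable g volume a b := by
  constructor <;>
    exact Integrable.mono' (integrableOn_const measure_Ioc_lt_top.ne)
      hm.restrict (ae_of_all _ h)

lemma locallyIntegrable_of_bound {g : ℝ → F}
    (hm : AEStronglyMeasurable g volume) (C : ℝ) (h : ∀ u, ‖g u‖ ≤ C) :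
    LocallyIntegrable g volume := by
  intro x
  exact ⟨closedBall x 1, closedBall_mem_nhds x one_pos,
    Integrable.mono' (integrableOn_const measure_closedBall_lt_top.ne)
      hm.restrict (ae_of_all _ h)⟩

lemma ae_hasDerivAt_primitive {g : ℝ → F}
    (hm : AEStronglyMeasurable g volume) (C : ℝ) (hb : ∀ u, ‖g u‖ ≤ C) (c : ℝ) :
    ∀ᵐ x, HasDerivAt (fun t => ∫ u in c..t, g u) (g x) x := by
  have hloc : LocallyIntegrable g volume := locallyIntegrable_of_bound hm C hb
  have hint : ∀ a b : ℝ, IntervalIntegrable g volume a b := intervalIntegrable_of_bound' hm C hb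
  filter_upwards [IsUnifLocDoublingMeasure.ae_tendsto_average_norm_sub (μ := volume) hloc 1] with x hx
  -- the averages over balls centered at x tend to 0
  have hδ : Tendsto (fun y : ℝ => |y - x|) (𝓝[≠] x) (𝓝[>] 0) := by
    rw [tendsto_nhdsWithin_iff]
    constructor
    · have : Tendsto (fun y : ℝ => |y - x|) (𝓝 x) (𝓝 |x - x|) :=
        ((continuous_id.sub continuous_const).abs).tendsto x
      simpa using this.mono_left nhdsWithin_le_nhds
    · filter_upwards [self_mem_nhdsWithin] with y hy
      exact abs_pos.2 (sub_ne_zero.2 hy)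
  have havg : Tendsto (fun y : ℝ => ⨍ u in closedBall x |y - x|, ‖g u - g x‖) (𝓝[≠] x) (𝓝 0) :=
    hx (fun _ => x) (fun y => |y - x|) hδ
      (Eventually.of_forall fun y => by simpa using mem_closedBall_self (by positivity))
  rw [hasDerivAt_iff_isLittleO]
  rw [Asymptotics.isLittleO_iff]
  intro ε hε
  have hmain : ∀ᶠ y in 𝓝[≠] x,
      ⨍ u in closedBall x |y - x|, ‖g u - g x‖ < ε / 2 :=
    havg.eventually_lt_const (by positivity)
  rw [eventually_nhdsWithin_iff] at hmain
  filter_upwards [hmain] with y hy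
  rcases eq_or_ne y x with rfl | hyx
  · simp
  have hy' := hy hyx
  set r : ℝ := |y - x| with hrdef
  have hr : 0 < r := abs_pos.2 (sub_ne_zero.2 hyx)
  -- rewrite the difference as an interval integral
  have e1 : (∫ u in c..y, g u) - ∫ u in c..x, g u = ∫ u in x..y, g u :=
    intervalIntegral.integral_interval_sub_left (hint c y) (hint c x)
  have e2 : (y - x) • g x = ∫ _ in x..y, g x := by
    rw [intervalIntegral.integral_const]
  have e3 : (∫ u in c..y, g u) - (∫ u in c..x, g u) - (y - x) • g x
      = ∫ u in x..y, (g u - g x) := by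
    rw [e1, e2, intervalIntegral.integral_sub (hint x y) intervalIntegrable_const]
  have hsub : Ι x y ⊆ closedBall x r := by
    intro u hu
    rcases le_total x y with hxy | hxy
    · rw [uIoc_of_le hxy] at hu
      rw [mem_closedBall, Real.dist_eq, hrdef, abs_of_nonneg (sub_nonneg.2 hxy)]
      rw [abs_le]
      exact ⟨by linarith [hu.1.le], by linarith [hu.2]⟩
    · rw [uIoc_of_ge hxy] at hu
      rw [mem_closedBall, Real.dist_eq, hrdef, abs_of_nonpos (sub_nonpos.2 hxy)]
      rw [abs_le]
      exact ⟨by linarith [hu.1.le], by linarith [hu.2]⟩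
  have hIball : IntegrableOn (fun u => ‖g u - g x‖) (closedBall x r) volume := by
    refine Integrable.norm ?_
    exact ((hloc.integrableOn_isCompact (isCompact_closedBall x r)).sub
      (integrableOn_const measure_closedBall_lt_top.ne))
  have hb1 : ‖∫ u in x..y, (g u - g x)‖ ≤ ∫ u in closedBall x r, ‖g u - g x‖ := by
    refine le_trans intervalIntegral.norm_integral_le_integral_norm_uIoc ?_
    refine setIntegral_mono_set hIball (ae_of_all _ fun u => norm_nonneg _)
      (HasSubset.Subset.eventuallyLE hsub)
  have hvol : volume.real (closedBall x r) = 2 * r := by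
    rw [measureReal_def, Real.volume_closedBall, ENNReal.toReal_ofReal (by positivity)]
  have hb2 : ∫ u in closedBall x r, ‖g u - g x‖ = (2 * r) * ⨍ u in closedBall x r, ‖g u - g x‖ := by
    rw [setAverage_eq, smul_eq_mul, hvol, ← mul_assoc]
    rw [mul_inv_cancel₀ (by positivity), one_mul]
  have : ‖(∫ u in c..y, g u) - (∫ u in c..x, g u) - (y - x) • g x‖ ≤ (2 * r) * (ε / 2) := by
    rw [e3]
    refine hb1.trans ?_
    rw [hb2]
    have havgnn : 0 ≤ ⨍ u in closedBall x r, ‖g u - g x‖ := by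
      rw [setAverage_eq]
      exact smul_nonneg (by positivity)
        (setIntegral_nonneg measurableSet_closedBall fun u _ => norm_nonneg _)
    nlinarith [hy'.le]
  calc ‖(∫ u in c..y, g u) - (∫ u in c..x, g u) - (y - x) • g x‖
      ≤ (2 * r) * (ε / 2) := this
    _ = ε * r := by ring
    _ = ε * ‖y - x‖ := by rw [Real.norm_eq_abs]






lemma abs_entry_le_norm {n : ℕ} (x : Fin n → Fin n → ℝ) (i j : Fin n) : |x i j| ≤ ‖x‖ := by
  have h1 : ‖x i j‖ ≤ ‖x i‖ := norm_le_pi_norm (x i) j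
  have h2 : ‖x i‖ ≤ ‖x‖ := norm_le_pi_norm x i
  simpa [Real.norm_eq_abs] using h1.trans h2

lemma norm_le_of_entries {n : ℕ} {x : Fin n → Fin n → ℝ} {C : ℝ} (hC : 0 ≤ C)
    (h : ∀ i j, |x i j| ≤ C) : ‖x‖ ≤ C := by
  refine (pi_norm_le_iff_of_nonneg hC).2 fun i => ?_
  refine (pi_norm_le_iff_of_nonneg hC).2 fun j => ?_
  simpa [Real.norm_eq_abs] using h i j

lemma intervalIntegrable_of_bound {F : Type*} [NormedAddCommGroup F] {g : ℝ → F}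
    (hm : AEStronglyMeasurable g volume) (C : ℝ) (h : ∀ u, ‖g u‖ ≤ C) (a b : ℝ) :
    IntervalIntegrable g volume a b := by
  constructor <;>
    exact Integrable.mono' (integrableOn_const measure_Ioc_lt_top.ne)
      hm.restrict (ae_of_all _ h)

section FixedPoint

variable {n : ℕ} {p q : ℝ} {s₀ : ℝ} (Bv : ℝ → Fin n → Fin n → ℝ)

/-- abbreviation for the right multiplication `x ↦ x · B s`. -/
def mulB (Bv : ℝ → Fin n → Fin n → ℝ) (s : ℝ) (x : Fin n → Fin n → ℝ) :
    Fin n → Fin n → ℝ := fun i j => ∑ l, x i l * Bv s l j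

lemma mulB_norm_le {M' : ℝ} (hBbd : ∀ s i j, |Bv s i j| ≤ M') (hM'0 : 0 ≤ M') (s : ℝ)
    (x : Fin n → Fin n → ℝ) : ‖mulB Bv s x‖ ≤ (n * M') * ‖x‖ := by
  refine norm_le_of_entries (by positivity) fun i j => ?_
  calc |∑ l, x i l * Bv s l j| ≤ ∑ l, |x i l * Bv s l j| := Finset.abs_sum_le_sum_abs _ _
    _ ≤ ∑ _l : Fin n, ‖x‖ * M' := by
        refine Finset.sum_le_sum fun l _ => ?_
        rw [abs_mul]
        exact mul_le_mul (abs_entry_le_norm x i l) (hBbd s l j) (abs_nonneg _) (norm_nonneg _)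
    _ = (n * M') * ‖x‖ := by simp [Finset.sum_const]; ring

lemma mulB_sub (s : ℝ) (x y : Fin n → Fin n → ℝ) :
    mulB Bv s x - mulB Bv s y = mulB Bv s (x - y) := by
  funext i j
  simp [mulB, sub_mul, Finset.sum_sub_distrib]

theorem integral_fixed_point (hpq : p ≤ q) (hs₀ : s₀ ∈ Icc p q) (hBmeas : ∀ i j, Measurable fun s => Bv s i j)
    {M' : ℝ} (hBbd : ∀ s i j, |Bv s i j| ≤ M') (hM'0 : 0 ≤ M')
    (R₀v : Fin n → Fin n → ℝ) :
    ∃ F : ℝ → Fin n → Fin n → ℝ,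
      Continuous F ∧
      (∀ s : ℝ, F s = F (projIcc p q hpq s)) ∧
      (∀ x ∈ Icc p q, F x = R₀v - ∫ u in s₀..x, mulB Bv u (F u)) ∧
      ∀ G : ℝ → Fin n → Fin n → ℝ, Continuous G →
        (∀ s : ℝ, G s = G (projIcc p q hpq s)) →
        (∀ x ∈ Icc p q, G x = R₀v - ∫ u in s₀..x, mulB Bv u (G u)) →
        ∀ s, G s = F s := by
  classical
  haveI : Nonempty (Icc p q) := ⟨⟨s₀, hs₀⟩⟩
  set C₀ : ℝ := n * M' with hC₀def
  have hC₀ : 0 ≤ C₀ := by positivity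
  set prj : ℝ → Icc p q := projIcc p q hpq with hprjdef
  -- the integrand associated to `f : C(Icc p q, Fin n → Fin n → ℝ)`
  set gf : C(Icc p q, Fin n → Fin n → ℝ) → ℝ → (Fin n → Fin n → ℝ) :=
    fun f u => mulB Bv u (f (prj u)) with hgfdef
  have hgf_meas : ∀ f : C(Icc p q, Fin n → Fin n → ℝ), AEStronglyMeasurable (gf f) volume := by
    intro f
    refine Measurable.aestronglyMeasurable ?_
    refine measurable_pi_lambda _ fun i => measurable_pi_lambda _ fun j => ?_
    refine Finset.measurable_sum _ fun l _ => Measurable.mul ?_ (hBmeas l j)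
    have hc : Continuous fun u : ℝ => f (prj u) i l :=
      (continuous_apply l).comp ((continuous_apply i).comp
        (f.continuous.comp continuous_projIcc))
    exact hc.measurable
  have hgf_bd : ∀ (f : C(Icc p q, Fin n → Fin n → ℝ)) (u : ℝ), ‖gf f u‖ ≤ C₀ * ‖f‖ := by
    intro f u
    refine (mulB_norm_le Bv hBbd hM'0 u _).trans ?_
    exact mul_le_mul_of_nonneg_left (f.norm_coe_le_norm (prj u)) hC₀
  have hgf_int : ∀ (f : C(Icc p q, Fin n → Fin n → ℝ)) (a b : ℝ),
      IntervalIntegrable (gf f) volume a b := fun f a b =>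
    intervalIntegrable_of_bound (hgf_meas f) _ (hgf_bd f) a b
  -- the Picard operator
  set T : C(Icc p q, Fin n → Fin n → ℝ) → C(Icc p q, Fin n → Fin n → ℝ) := fun f =>
    ⟨fun x => R₀v - ∫ u in s₀..(x : ℝ), gf f u,
      continuous_const.sub ((intervalIntegral.continuous_primitive (hgf_int f) s₀).comp
        continuous_subtype_val)⟩ with hTdef
  have hT_apply : ∀ (f : C(Icc p q, Fin n → Fin n → ℝ)) (x : Icc p q),
      T f x = R₀v - ∫ u in s₀..(x : ℝ), gf f u := fun f x => rfl
  have hsub : ∀ x : Icc p q, Ι s₀ (x : ℝ) ⊆ Icc p q := by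
    intro x u hu
    have h1 : u ∈ Ioc (min s₀ (x:ℝ)) (max s₀ (x:ℝ)) := hu
    exact ⟨le_trans (le_min hs₀.1 x.2.1) h1.1.le, le_trans h1.2 (max_le hs₀.2 x.2.2)⟩
  have hJabs : ∀ (t : ℝ) (k : ℕ), |∫ u in s₀..t, |u - s₀| ^ k| ≤ |t - s₀| ^ (k+1) / (k+1) := by
    intro t k
    rcases le_total s₀ t with h | h
    · have hcg : (∫ u in s₀..t, |u - s₀| ^ k) = ∫ u in s₀..t, (u - s₀) ^ k := by
        refine intervalIntegral.integral_congr fun u hu => ?_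
        rw [uIcc_of_le h] at hu
        rw [abs_of_nonneg (sub_nonneg.2 hu.1)]
      have hv : (∫ u in s₀..t, (u - s₀) ^ k) = (t - s₀) ^ (k+1) / (k+1) := by
        have h2 := intervalIntegral.integral_comp_sub_right (a := s₀) (b := t)
          (fun u => u ^ k) s₀
        rw [h2, integral_pow]
        simp
      rw [hcg, hv, abs_of_nonneg (div_nonneg (pow_nonneg (sub_nonneg.2 h) _) (by positivity)),
        abs_of_nonneg (sub_nonneg.2 h)]
    · have hsymm : (∫ u in s₀..t, |u - s₀| ^ k) = -∫ u in t..s₀, |u - s₀| ^ k :=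
        intervalIntegral.integral_symm t s₀
      have hcg : (∫ u in t..s₀, |u - s₀| ^ k) = ∫ u in t..s₀, (s₀ - u) ^ k := by
        refine intervalIntegral.integral_congr fun u hu => ?_
        rw [uIcc_of_le h] at hu
        rw [abs_sub_comm, abs_of_nonneg (sub_nonneg.2 hu.2)]
      have hv : (∫ u in t..s₀, (s₀ - u) ^ k) = (s₀ - t) ^ (k+1) / (k+1) := by
        have h2 := intervalIntegral.integral_comp_sub_left (a := t) (b := s₀)
          (fun u => u ^ k) s₀
        rw [h2, integral_pow]
        simp
      rw [hsymm, hcg, hv, abs_neg,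
        abs_of_nonneg (div_nonneg (pow_nonneg (sub_nonneg.2 h) _) (by positivity)),
        abs_of_nonpos (sub_nonpos.2 h), neg_sub]
  have key : ∀ (k : ℕ) (f g : C(Icc p q, Fin n → Fin n → ℝ)) (x : Icc p q),
      ‖T^[k] f x - T^[k] g x‖ ≤ C₀ ^ k * |(x:ℝ) - s₀| ^ k / (k.factorial : ℝ) * dist f g := by
    intro k
    induction k with
    | zero =>
      intro f g x
      simp only [Function.iterate_zero_apply, pow_zero, Nat.factorial_zero, Nat.cast_one,
        one_mul, div_one]
      rw [← dist_eq_norm]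
      exact ContinuousMap.dist_apply_le_dist x
    | succ k ih =>
      intro f g x
      rw [Function.iterate_succ_apply', Function.iterate_succ_apply']
      have hsplit : T (T^[k] f) x - T (T^[k] g) x
          = ∫ u in s₀..(x:ℝ), (gf (T^[k] g) u - gf (T^[k] f) u) := by
        rw [hT_apply, hT_apply, intervalIntegral.integral_sub (hgf_int _ _ _) (hgf_int _ _ _)]
        abel
      rw [hsplit]
      have hbd : ∀ᵐ u ∂(volume.restrict (Ι s₀ (x:ℝ))),
          ‖gf (T^[k] g) u - gf (T^[k] f) u‖
            ≤ (C₀ ^ (k+1) / (k.factorial : ℝ) * dist f g) * |u - s₀| ^ k := by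
        filter_upwards [ae_restrict_mem measurableSet_uIoc] with u hu
        have huIcc : u ∈ Icc p q := hsub x hu
        have hproj : ((prj u : Icc p q) : ℝ) = u := by
          rw [hprjdef, projIcc_of_mem hpq huIcc]
        have h1 : gf (T^[k] g) u - gf (T^[k] f) u
            = mulB Bv u ((T^[k] g) (prj u) - (T^[k] f) (prj u)) := mulB_sub Bv u _ _
        rw [h1]
        refine (mulB_norm_le Bv hBbd hM'0 u _).trans ?_
        have h2 := ih g f (prj u)
        rw [hproj, dist_comm g f] at h2
        calc C₀ * ‖(T^[k] g) (prj u) - (T^[k] f) (prj u)‖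
            ≤ C₀ * (C₀ ^ k * |u - s₀| ^ k / (k.factorial : ℝ) * dist f g) :=
              mul_le_mul_of_nonneg_left h2 hC₀
          _ = (C₀ ^ (k+1) / (k.factorial : ℝ) * dist f g) * |u - s₀| ^ k := by ring
      have hcontint : IntervalIntegrable
          (fun u => (C₀ ^ (k+1) / (k.factorial : ℝ) * dist f g) * |u - s₀| ^ k)
          volume s₀ (x:ℝ) :=
        (Continuous.intervalIntegrable (by fun_prop) _ _)
      have hb2 := intervalIntegral.norm_integral_le_abs_of_norm_le hbd hcontint
      refine hb2.trans ?_
      rw [intervalIntegral.integral_const_mul, abs_mul,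
        abs_of_nonneg (by positivity : (0:ℝ) ≤ C₀ ^ (k+1) / (k.factorial : ℝ) * dist f g)]
      calc (C₀ ^ (k+1) / (k.factorial : ℝ) * dist f g) * |∫ u in s₀..(x:ℝ), |u - s₀| ^ k|
          ≤ (C₀ ^ (k+1) / (k.factorial : ℝ) * dist f g) * (|(x:ℝ) - s₀| ^ (k+1) / (k+1)) :=
            mul_le_mul_of_nonneg_left (hJabs (x:ℝ) k) (by positivity)
        _ = C₀ ^ (k+1) * |(x:ℝ) - s₀| ^ (k+1) / ((k+1).factorial : ℝ) * dist f g := by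
            rw [Nat.factorial_succ]
            push_cast
            have hkf : ((k.factorial : ℝ)) ≠ 0 := by positivity
            field_simp
  have hlen : ∀ x : Icc p q, |(x:ℝ) - s₀| ≤ q - p := by
    intro x
    have h1 := x.2.1; have h2 := x.2.2
    rw [abs_le]
    constructor
    · linarith [hs₀.2]
    · linarith [hs₀.1]
  have hiter : ∀ (k : ℕ) (f g : C(Icc p q, Fin n → Fin n → ℝ)),
      dist (T^[k] f) (T^[k] g) ≤ (C₀ * (q - p)) ^ k / (k.factorial : ℝ) * dist f g := by
    intro k f g
    have hqp : 0 ≤ q - p := sub_nonneg.2 hpq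
    rw [ContinuousMap.dist_le (by positivity)]
    intro x
    rw [dist_eq_norm]
    refine (key k f g x).trans ?_
    have hpow : C₀ ^ k * |(x:ℝ) - s₀| ^ k ≤ (C₀ * (q - p)) ^ k := by
      calc C₀ ^ k * |(x:ℝ) - s₀| ^ k ≤ C₀ ^ k * (q - p) ^ k :=
            mul_le_mul_of_nonneg_left (pow_le_pow_left₀ (abs_nonneg _) (hlen x) k)
              (by positivity)
        _ = (C₀ * (q - p)) ^ k := (mul_pow _ _ _).symm
    calc C₀ ^ k * |(x:ℝ) - s₀| ^ k / (k.factorial : ℝ) * dist f g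
        = (C₀ ^ k * |(x:ℝ) - s₀| ^ k) * (((k.factorial : ℝ))⁻¹ * dist f g) := by ring
      _ ≤ (C₀ * (q - p)) ^ k * (((k.factorial : ℝ))⁻¹ * dist f g) :=
            mul_le_mul_of_nonneg_right hpow (by positivity)
      _ = (C₀ * (q - p)) ^ k / (k.factorial : ℝ) * dist f g := by ring
  obtain ⟨k, hk⟩ : ∃ k : ℕ, (C₀ * (q - p)) ^ k / (k.factorial : ℝ) < 1 := by
    have h := FloorSemiring.tendsto_pow_div_factorial_atTop (K := ℝ) (C₀ * (q - p))
    exact (h.eventually (gt_mem_nhds one_pos)).exists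
  set Kc : NNReal := Real.toNNReal ((C₀ * (q - p)) ^ k / (k.factorial : ℝ)) with hKcdef
  have hqp : 0 ≤ q - p := sub_nonneg.2 hpq
  have hcontr : ContractingWith Kc (T^[k]) := by
    refine ⟨Real.toNNReal_lt_one.2 hk, LipschitzWith.of_dist_le_mul fun f g => ?_⟩
    refine (hiter k f g).trans ?_
    rw [hKcdef, Real.coe_toNNReal _ (by positivity)]
  set Ffix := ContractingWith.fixedPoint (T^[k]) hcontr with hFfixdef
  have hfixk : Function.IsFixedPt (T^[k]) Ffix := hcontr.fixedPoint_isFixedPt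
  have hfixT : T Ffix = Ffix := by
    have h1 : Function.IsFixedPt (T^[k]) (T Ffix) := by
      show T^[k] (T Ffix) = T Ffix
      calc T^[k] (T Ffix) = T^[k+1] Ffix := by rw [Function.iterate_succ_apply]
        _ = T (T^[k] Ffix) := Function.iterate_succ_apply' T k Ffix
        _ = T Ffix := by rw [hfixk]
    exact hcontr.fixedPoint_unique' h1 hfixk
  have hprj_idem : ∀ s : ℝ, prj ((prj s : Icc p q) : ℝ) = prj s := by
    intro s
    rw [hprjdef]
    exact projIcc_of_mem hpq (prj s).2
  refine ⟨fun s => Ffix (prj s), Ffix.continuous.comp continuous_projIcc, ?_, ?_, ?_⟩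
  · intro s
    show Ffix (prj s) = Ffix (prj ((prj s : Icc p q) : ℝ))
    rw [hprj_idem s]
  · intro x hx
    have hpx : prj x = ⟨x, hx⟩ := by rw [hprjdef]; exact projIcc_of_mem hpq hx
    calc Ffix (prj x) = (T Ffix) (prj x) := by rw [hfixT]
      _ = R₀v - ∫ u in s₀..((prj x : Icc p q) : ℝ), gf Ffix u := hT_apply Ffix (prj x)
      _ = R₀v - ∫ u in s₀..x, mulB Bv u (Ffix (prj u)) := by rw [hpx]
  · intro G hGc hGinv hGeq
    set G' : C(Icc p q, Fin n → Fin n → ℝ) := ⟨fun t => G ↑t, hGc.comp continuous_subtype_val⟩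
      with hG'def
    have hgfG : gf G' = fun u => mulB Bv u (G u) := by
      funext u
      rw [hgfdef]
      show mulB Bv u (G ↑(prj u)) = mulB Bv u (G u)
      rw [← hGinv u]
    have hfixG : Function.IsFixedPt T G' := by
      show T G' = G'
      ext1 t
      rw [hT_apply, hgfG]
      exact (hGeq ↑t t.2).symm
    have hGF : G' = Ffix := hcontr.fixedPoint_unique' (hfixG.iterate k) hfixk
    intro s
    rw [hGinv s]
    show G ↑(prj s) = Ffix (prj s)
    rw [← hGF]
    rfl

end FixedPoint




lemma skew_cancel {n : ℕ} (P B : Fin n → Fin n → ℝ) (hB : ∀ a b, B b a = -B a b) (i j : Fin n) :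
    ∑ l, (-(∑ m, P i m * B m l) * P j l + P i l * -(∑ m, P j m * B m l)) = 0 := by
  have hS : (∑ l, ∑ m, P i l * (P j m * B m l))
      = -∑ l, ∑ m, (P i m * B m l) * P j l := by
    rw [Finset.sum_comm, ← Finset.sum_neg_distrib]
    refine Finset.sum_congr rfl fun l _ => ?_
    rw [← Finset.sum_neg_distrib]
    refine Finset.sum_congr rfl fun m _ => ?_
    rw [hB l m]
    ring
  calc ∑ l, (-(∑ m, P i m * B m l) * P j l + P i l * -(∑ m, P j m * B m l))
      = (∑ l, -(∑ m, (P i m * B m l) * P j l)) + ∑ l, -(∑ m, P i l * (P j m * B m l)) := by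
        rw [← Finset.sum_add_distrib]
        refine Finset.sum_congr rfl fun l _ => ?_
        rw [neg_mul, Finset.sum_mul, mul_neg, Finset.mul_sum]
    _ = 0 := by
        rw [Finset.sum_neg_distrib, Finset.sum_neg_distrib, hS]
        ring

end SkewODEAux

open SkewODEAux

/-- The linear ODE `R' + R Ã = 0` with skew-symmetric, essentially bounded,
measurable coefficient matrix `Ã` has a unique Lipschitz solution with prescribed orthogonal
initial datum, and this solution is orthogonal at every point. -/
theorem skew_linear_ode_orthogonal_solution
    (n : ℕ) (p q : ℝ) (hpq : p ≤ q) (s₀ : ℝ) (hs₀ : s₀ ∈ Icc p q)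
    (A : ℝ → Matrix (Fin n) (Fin n) ℝ)
    (hmeas : ∀ i j, Measurable fun s => A s i j)
    (hbdd : ∃ M : ℝ, ∀ᵐ s ∂((volume : Measure ℝ).restrict (Icc p q)),
      ∀ i j, |A s i j| ≤ M)
    (hskew : ∀ᵐ s ∂((volume : Measure ℝ).restrict (Icc p q)), (A s)ᵀ = -A s)
    (R₀ : Matrix (Fin n) (Fin n) ℝ) (hR₀ : R₀ᵀ * R₀ = 1) :
    ∃ R : ℝ → Matrix (Fin n) (Fin n) ℝ,
      ((∃ L : NNReal, ∀ i j, LipschitzOnWith L (fun s => R s i j) (Icc p q)) ∧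
        R s₀ = R₀ ∧
        (∀ᵐ s ∂((volume : Measure ℝ).restrict (Icc p q)),
          ∀ i j, HasDerivAt (fun u => R u i j) (-(∑ l, R s i l * A s l j)) s) ∧
        (∀ s ∈ Icc p q, (R s)ᵀ * R s = 1)) ∧
      ∀ R' : ℝ → Matrix (Fin n) (Fin n) ℝ,
        ((∃ L : NNReal, ∀ i j, LipschitzOnWith L (fun s => R' s i j) (Icc p q)) ∧
          R' s₀ = R₀ ∧
          (∀ᵐ s ∂((volume : Measure ℝ).restrict (Icc p q)),
            ∀ i j, HasDerivAt (fun u => R' u i j) (-(∑ l, R' s i l * A s l j)) s)) →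
        ∀ s ∈ Icc p q, R' s = R s := by
  classical
  obtain ⟨M, hM⟩ := hbdd
  set M' : ℝ := max M 0 with hM'def
  have hM'0 : (0:ℝ) ≤ M' := le_max_right _ _
  -- the "good" set on which we keep the coefficient matrix
  set S : Set ℝ := {s | (∀ i j, |A s i j| ≤ M) ∧ ∀ i j, A s j i = -A s i j} ∩ Icc p q
    with hSdef
  have hSmeas : MeasurableSet S := by
    refine MeasurableSet.inter ?_ measurableSet_Icc
    have h1 : MeasurableSet {s : ℝ | ∀ i j, |A s i j| ≤ M} := by
      have he : {s : ℝ | ∀ i j, |A s i j| ≤ M} = ⋂ i, ⋂ j, {s : ℝ | |A s i j| ≤ M} := by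
        ext s; simp [Set.mem_iInter]
      rw [he]
      exact MeasurableSet.iInter fun i => MeasurableSet.iInter fun j =>
        measurableSet_le (hmeas i j).abs measurable_const
    have h2 : MeasurableSet {s : ℝ | ∀ i j, A s j i = -A s i j} := by
      have he : {s : ℝ | ∀ i j, A s j i = -A s i j}
          = ⋂ i, ⋂ j, {s : ℝ | A s j i = -A s i j} := by
        ext s; simp [Set.mem_iInter]
      rw [he]
      exact MeasurableSet.iInter fun i => MeasurableSet.iInter fun j =>
        measurableSet_eq_fun (hmeas j i) (hmeas i j).neg
    exact h1.inter h2
  -- the truncated coefficient matrix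
  set Bv : ℝ → Fin n → Fin n → ℝ := fun s i j => S.indicator (fun t => A t i j) s with hBvdef
  have hBv_mem : ∀ s ∈ S, ∀ i j, Bv s i j = A s i j := fun s hs i j =>
    Set.indicator_of_mem hs _
  have hBv_not : ∀ s ∉ S, ∀ i j, Bv s i j = 0 := fun s hs i j =>
    Set.indicator_of_notMem hs _
  have hBmeas : ∀ i j, Measurable fun s => Bv s i j := fun i j =>
    (hmeas i j).indicator hSmeas
  have hBbd : ∀ (s : ℝ) (i j : Fin n), |Bv s i j| ≤ M' := by
    intro s i j
    by_cases hs : s ∈ S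
    · rw [hBv_mem s hs i j]
      exact (hs.1.1 i j).trans (le_max_left _ _)
    · rw [hBv_not s hs i j]
      simpa using hM'0
  have hBskew : ∀ (s : ℝ) (i j : Fin n), Bv s j i = -Bv s i j := by
    intro s i j
    by_cases hs : s ∈ S
    · rw [hBv_mem s hs j i, hBv_mem s hs i j]
      exact hs.1.2 i j
    · rw [hBv_not s hs j i, hBv_not s hs i j]
      simp
  have hAE : ∀ᵐ s ∂((volume : Measure ℝ).restrict (Icc p q)),
      ∀ i j, Bv s i j = A s i j := by
    filter_upwards [hM, hskew, ae_restrict_mem measurableSet_Icc] with s h1 h2 h3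
    have hsk : ∀ i j : Fin n, A s j i = -A s i j := by
      intro i j
      have := congrFun (congrFun h2 i) j
      simpa [Matrix.transpose_apply, Matrix.neg_apply] using this
    exact fun i j => hBv_mem s ⟨⟨h1, hsk⟩, h3⟩ i j
  set R₀v : Fin n → Fin n → ℝ := fun i j => R₀ i j with hR₀vdef
  -- the fixed point of the Picard operator
  obtain ⟨F, hFc, hFinv, hFeq, hFuniq⟩ :=
    integral_fixed_point Bv hpq hs₀ hBmeas hBbd hM'0 R₀v
  set C₀ : ℝ := n * M' with hC₀def
  have hC₀ : (0:ℝ) ≤ C₀ := by positivity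
  -- a bound for F
  obtain ⟨CF, hCF0, hCFbd⟩ : ∃ CF : ℝ, 0 ≤ CF ∧ ∀ s, ‖F s‖ ≤ CF := by
    obtain ⟨y, -, hy⟩ := (isCompact_Icc (a := p) (b := q)).exists_isMaxOn
      (Set.nonempty_Icc.2 hpq) (hFc.norm.continuousOn)
    refine ⟨‖F y‖, norm_nonneg _, fun s => ?_⟩
    rw [hFinv s]
    exact hy (Subtype.coe_prop _)
  -- the integrand for the fixed point
  set gF : ℝ → Fin n → Fin n → ℝ := fun u => mulB Bv u (F u) with hgFdef
  have hgFmeas : AEStronglyMeasurable gF volume := by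
    refine Measurable.aestronglyMeasurable ?_
    refine measurable_pi_lambda _ fun i => measurable_pi_lambda _ fun j => ?_
    refine Finset.measurable_sum _ fun l _ => Measurable.mul ?_ (hBmeas l j)
    exact ((continuous_apply l).comp ((continuous_apply i).comp hFc)).measurable
  have hgFbd : ∀ u, ‖gF u‖ ≤ C₀ * CF := by
    intro u
    refine (mulB_norm_le Bv hBbd hM'0 u (F u)).trans ?_
    exact mul_le_mul_of_nonneg_left (hCFbd u) hC₀
  have hgFint : ∀ a b : ℝ, IntervalIntegrable gF volume a b :=
    intervalIntegrable_of_bound hgFmeas _ hgFbd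
  -- global Lipschitz estimate for F
  have hFlipn : ∀ x y : ℝ, ‖F x - F y‖ ≤ (C₀ * CF) * |x - y| := by
    intro x y
    set a : ℝ := (projIcc p q hpq x : ℝ) with hadef
    set b : ℝ := (projIcc p q hpq y : ℝ) with hbdef
    have ha : a ∈ Icc p q := Subtype.coe_prop _
    have hb : b ∈ Icc p q := Subtype.coe_prop _
    have h1 : F x - F y = ∫ u in a..b, gF u := by
      rw [hFinv x, hFinv y, hFeq a ha, hFeq b hb]
      rw [sub_sub_sub_cancel_left]
      exact intervalIntegral.integral_interval_sub_left (hgFint s₀ b) (hgFint s₀ a)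
    rw [h1]
    refine (intervalIntegral.norm_integral_le_of_norm_le_const fun u _ => hgFbd u).trans ?_
    refine mul_le_mul_of_nonneg_left ?_ (by positivity)
    rw [hadef, hbdef, abs_sub_comm x y]
    exact Set.abs_projIcc_sub_projIcc hpq
  have hFlipe : ∀ i j, LipschitzWith (Real.toNNReal (C₀ * CF)) (fun s => F s i j) := by
    intro i j
    refine LipschitzWith.of_dist_le_mul fun x y => ?_
    rw [Real.dist_eq, Real.dist_eq, Real.coe_toNNReal _ (by positivity)]
    have h1 : |F x i j - F y i j| ≤ ‖F x - F y‖ := by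
      have := abs_entry_le_norm (F x - F y) i j
      simpa using this
    exact h1.trans (hFlipn x y)
  -- the a.e. derivative of F (vector-valued)
  have hFderiv : ∀ᵐ x : ℝ, x ∈ Ioo p q → HasDerivAt F (-(gF x)) x := by
    filter_upwards [ae_hasDerivAt_primitive hgFmeas (C₀ * CF) hgFbd s₀] with x hx hmem
    have hloc : F =ᶠ[nhds x] fun t => R₀v - ∫ u in s₀..t, gF u := by
      filter_upwards [Ioo_mem_nhds hmem.1 hmem.2] with t ht
      exact hFeq t (Ioo_subset_Icc_self ht)
    have hD : HasDerivAt (fun t => R₀v - ∫ u in s₀..t, gF u) (0 - gF x) x :=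
      (hasDerivAt_const x R₀v).sub hx
    rw [zero_sub] at hD
    exact hD.congr_of_eventuallyEq hloc
  -- interior points are a.e. in the restricted measure
  have hIoo_ae : ∀ᵐ s ∂((volume : Measure ℝ).restrict (Icc p q)), s ∈ Ioo p q := by
    have h0 : {a : ℝ | ¬ a ∈ Ioo p q} = (Ioo p q)ᶜ := rfl
    rw [ae_iff, h0, Measure.restrict_apply (measurableSet_Ioo (a := p) (b := q)).compl]
    refine measure_mono_null ?_
      (Set.Finite.measure_zero ((Set.finite_singleton q).insert p) volume)
    rintro x ⟨hx1, hx2⟩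
    simp only [mem_compl_iff, mem_Ioo, not_and_or, not_lt] at hx1
    rcases hx1 with h | h
    · exact Or.inl (le_antisymm h hx2.1)
    · exact Or.inr (le_antisymm hx2.2 h)
  have hFs₀ : F s₀ = R₀v := by
    rw [hFeq s₀ hs₀, intervalIntegral.integral_same, sub_zero]
  -- the orthogonality function W
  have hW : ∀ (i j : Fin n), ∀ s ∈ Icc p q,
      (∑ l, F s i l * F s j l) = ∑ l, R₀v i l * R₀v j l := by
    intro i j
    have hwlip : LipschitzWith (Real.toNNReal (n * (2 * CF) * (C₀ * CF)))
        (fun s => ∑ l, F s i l * F s j l) := by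
      refine LipschitzWith.of_dist_le_mul fun x y => ?_
      rw [Real.dist_eq, Real.dist_eq, Real.coe_toNNReal _ (by positivity)]
      have hterm : ∀ l : Fin n, |F x i l * F x j l - F y i l * F y j l|
          ≤ (2 * CF) * ((C₀ * CF) * |x - y|) := by
        intro l
        have hid : F x i l * F x j l - F y i l * F y j l
            = F x i l * (F x j l - F y j l) + (F x i l - F y i l) * F y j l := by ring
        rw [hid]
        have hb1 : |F x i l| ≤ CF := (abs_entry_le_norm (F x) i l).trans (hCFbd x)
        have hb2 : |F y j l| ≤ CF := (abs_entry_le_norm (F y) j l).trans (hCFbd y)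
        have hb3 : |F x j l - F y j l| ≤ (C₀ * CF) * |x - y| := by
          have := abs_entry_le_norm (F x - F y) j l
          simp only [Pi.sub_apply] at this
          exact this.trans (hFlipn x y)
        have hb4 : |F x i l - F y i l| ≤ (C₀ * CF) * |x - y| := by
          have := abs_entry_le_norm (F x - F y) i l
          simp only [Pi.sub_apply] at this
          exact this.trans (hFlipn x y)
        calc |F x i l * (F x j l - F y j l) + (F x i l - F y i l) * F y j l|
            ≤ |F x i l * (F x j l - F y j l)| + |(F x i l - F y i l) * F y j l| :=
              abs_add_le _ _
          _ = |F x i l| * |F x j l - F y j l| + |F x i l - F y i l| * |F y j l| := by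
              rw [abs_mul, abs_mul]
          _ ≤ CF * ((C₀ * CF) * |x - y|) + ((C₀ * CF) * |x - y|) * CF := by
              refine add_le_add (mul_le_mul hb1 hb3 (abs_nonneg _) hCF0) ?_
              exact mul_le_mul hb4 hb2 (abs_nonneg _) (by positivity)
          _ = (2 * CF) * ((C₀ * CF) * |x - y|) := by ring
      calc |(∑ l, F x i l * F x j l) - ∑ l, F y i l * F y j l|
          = |∑ l, (F x i l * F x j l - F y i l * F y j l)| := by
            rw [Finset.sum_sub_distrib]
        _ ≤ ∑ l, |F x i l * F x j l - F y i l * F y j l| :=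
            Finset.abs_sum_le_sum_abs _ _
        _ ≤ ∑ _l : Fin n, (2 * CF) * ((C₀ * CF) * |x - y|) :=
            Finset.sum_le_sum fun l _ => hterm l
        _ = (n : ℝ) * ((2 * CF) * ((C₀ * CF) * |x - y|)) := by
            simp [Finset.sum_const]
        _ = (n : ℝ) * (2 * CF) * (C₀ * CF) * |x - y| := by ring
    have hwd : ∀ᵐ x : ℝ, x ∈ Ioo p q →
        HasDerivAt (fun s => ∑ l, F s i l * F s j l) 0 x := by
      filter_upwards [hFderiv] with x hx hmem
      have hD := hx hmem
      have hent : ∀ a b : Fin n, HasDerivAt (fun s => F s a b) ((-(gF x)) a b) x :=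
        fun a b => hasDerivAt_pi.1 (hasDerivAt_pi.1 hD a) b
      have hsum : HasDerivAt (fun s => ∑ l, F s i l * F s j l)
          (∑ l, ((-(gF x)) i l * F x j l + F x i l * ((-(gF x)) j l))) x :=
        HasDerivAt.fun_sum fun l _ => (hent i l).mul (hent j l)
      have hzero : (∑ l, ((-(gF x)) i l * F x j l + F x i l * ((-(gF x)) j l))) = 0 := by
        have hc := skew_cancel (F x) (Bv x) (hBskew x) i j
        simpa [hgFdef, mulB, Pi.neg_apply] using hc
      rwa [hzero] at hsum
    intro s hsI
    have := eq_of_lipschitz_ae_deriv_zero hwlip hwd hsI hs₀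
    rw [this, hFs₀]
  -- build the three existence properties
  have hex1 : ∃ L : NNReal, ∀ i j, LipschitzOnWith L (fun s => F s i j) (Icc p q) :=
    ⟨Real.toNNReal (C₀ * CF), fun i j => (hFlipe i j).lipschitzOnWith⟩
  have hex2 : F s₀ = R₀ := hFs₀
  have hex3 : ∀ᵐ s ∂((volume : Measure ℝ).restrict (Icc p q)),
      ∀ i j, HasDerivAt (fun u => F u i j) (-(∑ l, F s i l * A s l j)) s := by
    filter_upwards [hIoo_ae, ae_restrict_of_ae hFderiv, hAE] with s hs1 hs2 hs3
    intro i j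
    have hD := hs2 hs1
    have hDij : HasDerivAt (fun u => F u i j) ((-(gF s)) i j) s :=
      hasDerivAt_pi.1 (hasDerivAt_pi.1 hD i) j
    have hval : (-(gF s)) i j = -(∑ l, F s i l * A s l j) := by
      show -(∑ l, F s i l * Bv s l j) = -(∑ l, F s i l * A s l j)
      congr 1
      exact Finset.sum_congr rfl fun l _ => by rw [hs3 l j]
    rwa [hval] at hDij
  have hex4 : ∀ s ∈ Icc p q, (show Matrix (Fin n) (Fin n) ℝ from F s)ᵀ
      * (show Matrix (Fin n) (Fin n) ℝ from F s) = 1 := by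
    intro s hsI
    have h1 : R₀ * R₀ᵀ = 1 := mul_eq_one_comm.mp hR₀
    have hFs : (show Matrix (Fin n) (Fin n) ℝ from F s)
        * (show Matrix (Fin n) (Fin n) ℝ from F s)ᵀ = 1 := by
      ext i j
      rw [Matrix.mul_apply]
      simp only [Matrix.transpose_apply]
      have h2 := hW i j s hsI
      have h3 := congrFun (congrFun h1 i) j
      rw [Matrix.mul_apply] at h3
      simp only [Matrix.transpose_apply] at h3
      exact h2.trans h3
    exact mul_eq_one_comm.mp hFs
  refine ⟨F, ⟨hex1, hex2, hex3, hex4⟩, ?_⟩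
  -- uniqueness
  rintro R' ⟨⟨L', hL'⟩, hinit', hode'⟩ s hsI
  set pc : ℝ → ℝ := fun t => (projIcc p q hpq t : ℝ) with hpcdef
  have hpc_mem : ∀ t, pc t ∈ Icc p q := fun t => Subtype.coe_prop _
  have hpc_id : ∀ t ∈ Icc p q, pc t = t := by
    intro t ht
    rw [hpcdef]
    simp only
    rw [projIcc_of_mem hpq ht]
  have hpc_lip : ∀ t u : ℝ, |pc t - pc u| ≤ |t - u| := fun t u =>
    Set.abs_projIcc_sub_projIcc hpq
  set ρ : ℝ → Fin n → Fin n → ℝ := fun t i j => R' (pc t) i j with hρdef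
  have hρ_entry_lip : ∀ i j, LipschitzWith L' (fun t => ρ t i j) := by
    intro i j
    refine LipschitzWith.of_dist_le_mul fun x y => ?_
    have h1 := (hL' i j).dist_le_mul (pc x) (hpc_mem x) (pc y) (hpc_mem y)
    refine h1.trans ?_
    rw [Real.dist_eq, Real.dist_eq]
    exact mul_le_mul_of_nonneg_left (hpc_lip x y) L'.coe_nonneg
  have hρc : Continuous ρ :=
    continuous_pi fun i => continuous_pi fun j => (hρ_entry_lip i j).continuous
  have hρ_inv : ∀ t : ℝ, ρ t = ρ (pc t) := by
    intro t
    funext i j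
    show R' (pc t) i j = R' (pc (pc t)) i j
    rw [hpc_id (pc t) (hpc_mem t)]
  set Cρ : ℝ := ‖R₀v‖ + L' * (q - p) with hCρdef
  have hqp : (0:ℝ) ≤ q - p := sub_nonneg.2 hpq
  have hCρ0 : 0 ≤ Cρ := by positivity
  have hρ_bd : ∀ t, ‖ρ t‖ ≤ Cρ := by
    intro t
    refine norm_le_of_entries hCρ0 fun i j => ?_
    have h0 : R' s₀ i j = R₀v i j := by rw [hinit']
    have h1 : |ρ t i j - R₀v i j| ≤ L' * (q - p) := by
      rw [← h0]
      have h2 := (hL' i j).dist_le_mul (pc t) (hpc_mem t) s₀ hs₀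
      rw [Real.dist_eq, Real.dist_eq] at h2
      refine h2.trans (mul_le_mul_of_nonneg_left ?_ L'.coe_nonneg)
      rw [abs_le]
      constructor
      · have := (hpc_mem t).1; have := hs₀.2; linarith [(hpc_mem t).1, hs₀.2]
      · linarith [(hpc_mem t).2, hs₀.1]
    calc |ρ t i j| = |(ρ t i j - R₀v i j) + R₀v i j| := by ring_nf
      _ ≤ |ρ t i j - R₀v i j| + |R₀v i j| := abs_add_le _ _
      _ ≤ L' * (q - p) + ‖R₀v‖ := add_le_add h1 (abs_entry_le_norm R₀v i j)
      _ = Cρ := by rw [hCρdef]; ring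
  set gρ : ℝ → Fin n → Fin n → ℝ := fun u => mulB Bv u (ρ u) with hgρdef
  have hgρmeas : AEStronglyMeasurable gρ volume := by
    refine Measurable.aestronglyMeasurable ?_
    refine measurable_pi_lambda _ fun i => measurable_pi_lambda _ fun j => ?_
    refine Finset.measurable_sum _ fun l _ => Measurable.mul ?_ (hBmeas l j)
    exact ((continuous_apply l).comp ((continuous_apply i).comp hρc)).measurable
  have hgρbd : ∀ u, ‖gρ u‖ ≤ C₀ * Cρ := by
    intro u
    refine (mulB_norm_le Bv hBbd hM'0 u (ρ u)).trans ?_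
    exact mul_le_mul_of_nonneg_left (hρ_bd u) hC₀
  have hgρint : ∀ a b : ℝ, IntervalIntegrable gρ volume a b :=
    intervalIntegrable_of_bound hgρmeas _ hgρbd
  set Ψ : ℝ → Fin n → Fin n → ℝ := fun t => R₀v - ∫ u in s₀..t, gρ u with hΨdef
  have hΨlipn : ∀ x y : ℝ, ‖Ψ x - Ψ y‖ ≤ (C₀ * Cρ) * |x - y| := by
    intro x y
    have h1 : Ψ x - Ψ y = ∫ u in x..y, gρ u := by
      rw [hΨdef]
      simp only
      rw [sub_sub_sub_cancel_left]
      exact intervalIntegral.integral_interval_sub_left (hgρint s₀ y) (hgρint s₀ x)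
    rw [h1]
    refine (intervalIntegral.norm_integral_le_of_norm_le_const fun u _ => hgρbd u).trans ?_
    rw [abs_sub_comm x y]
  have hφlip : ∀ i j, LipschitzWith (L' + Real.toNNReal (C₀ * Cρ))
      (fun t => ρ t i j - Ψ t i j) := by
    intro i j
    refine LipschitzWith.of_dist_le_mul fun x y => ?_
    rw [Real.dist_eq, Real.dist_eq]
    have h1 : |ρ x i j - ρ y i j| ≤ (L' : ℝ) * |x - y| := by
      have := (hρ_entry_lip i j).dist_le_mul x y
      rwa [Real.dist_eq, Real.dist_eq] at this
    have h2 : |Ψ x i j - Ψ y i j| ≤ (C₀ * Cρ) * |x - y| := by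
      have := abs_entry_le_norm (Ψ x - Ψ y) i j
      simp only [Pi.sub_apply] at this
      exact this.trans (hΨlipn x y)
    have h3 : ((L' + Real.toNNReal (C₀ * Cρ) : NNReal) : ℝ)
        = (L' : ℝ) + (C₀ * Cρ) := by
      rw [NNReal.coe_add, Real.coe_toNNReal _ (by positivity)]
    rw [h3]
    calc |(ρ x i j - Ψ x i j) - (ρ y i j - Ψ y i j)|
        = |(ρ x i j - ρ y i j) - (Ψ x i j - Ψ y i j)| := by ring_nf
      _ ≤ |ρ x i j - ρ y i j| + |Ψ x i j - Ψ y i j| := abs_sub _ _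
      _ ≤ (L' : ℝ) * |x - y| + (C₀ * Cρ) * |x - y| := add_le_add h1 h2
      _ = ((L' : ℝ) + (C₀ * Cρ)) * |x - y| := by ring
  have hφderiv : ∀ᵐ x : ℝ, x ∈ Ioo p q →
      ∀ i j, HasDerivAt (fun t => ρ t i j - Ψ t i j) 0 x := by
    filter_upwards [(ae_restrict_iff' measurableSet_Icc).mp hode',
      (ae_restrict_iff' measurableSet_Icc).mp hAE,
      ae_hasDerivAt_primitive hgρmeas (C₀ * Cρ) hgρbd s₀] with x hode'' hBA hprim hmem
    have hxIcc : x ∈ Icc p q := Ioo_subset_Icc_self hmem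
    intro i j
    have h1 : HasDerivAt (fun t => ρ t i j) (-(∑ l, R' x i l * A x l j)) x := by
      refine (hode'' hxIcc i j).congr_of_eventuallyEq ?_
      filter_upwards [Ioo_mem_nhds hmem.1 hmem.2] with t ht
      show ρ t i j = R' t i j
      rw [hρdef]
      simp only
      rw [hpc_id t (Ioo_subset_Icc_self ht)]
    have h2 : HasDerivAt (fun t => Ψ t i j) (-(∑ l, R' x i l * A x l j)) x := by
      have hD : HasDerivAt Ψ (-(gρ x)) x := by
        have h4 : HasDerivAt (fun t => R₀v - ∫ u in s₀..t, gρ u) (0 - gρ x) x :=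
          (hasDerivAt_const x R₀v).sub hprim
        rw [zero_sub] at h4
        exact h4
      have h3 : HasDerivAt (fun t => Ψ t i j) ((-(gρ x)) i j) x :=
        hasDerivAt_pi.1 (hasDerivAt_pi.1 hD i) j
      have hval : (-(gρ x)) i j = -(∑ l, R' x i l * A x l j) := by
        show -(∑ l, ρ x i l * Bv x l j) = -(∑ l, R' x i l * A x l j)
        congr 1
        refine Finset.sum_congr rfl fun l _ => ?_
        rw [hBA hxIcc l j]
        have : ρ x i l = R' x i l := by
          rw [hρdef]
          simp only
          rw [hpc_id x hxIcc]
        rw [this]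
      rwa [hval] at h3
    have := h1.fun_sub h2
    simpa using this
  have hρΨ : ∀ x ∈ Icc p q, ρ x = Ψ x := by
    intro x hx
    funext i j
    have hd : ∀ᵐ t : ℝ, t ∈ Ioo p q → HasDerivAt (fun u => ρ u i j - Ψ u i j) 0 t := by
      filter_upwards [hφderiv] with t ht hm
      exact ht hm i j
    have hc := eq_of_lipschitz_ae_deriv_zero (hφlip i j) hd hx hs₀
    have hρs₀ : ρ s₀ i j = R₀v i j := by
      rw [hρdef]
      simp only
      rw [hpc_id s₀ hs₀, hinit']
    have hΨs₀ : Ψ s₀ i j = R₀v i j := by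
      rw [hΨdef]
      simp only [intervalIntegral.integral_same]
      rw [sub_zero]
    have : ρ x i j - Ψ x i j = 0 := by
      rw [hc, hρs₀, hΨs₀]
      ring
    linarith [this]
  have hGeq : ∀ x ∈ Icc p q, ρ x = R₀v - ∫ u in s₀..x, mulB Bv u (ρ u) :=
    fun x hx => hρΨ x hx
  have hρF : ∀ t : ℝ, ρ t = F t := hFuniq ρ hρc hρ_inv hGeq
  have hfin : R' s = ρ s := by
    funext i j
    show R' s i j = R' (pc s) i j
    rw [hpc_id s hsI]
  exact hfin.trans (hρF s)
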